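/- Let p > 1 and p* = p/(p−1). Then 2^{2/p}·∫₀¹ (1 − t^p)^{−1/p*} dt = 2·∫₀¹ (1 − t^p)^{−1/2} dt; equivalently, 2^{2/p}·π_{p*,p} = 2·π_{2,p}, i.e. π_{2,p}/2^{2/p} = π_{p*,p}/2. -/
import Mathlib

open MeasureTheory Set Real

private lemma realBeta (u v : ℝ) (hu : 0 < u) (hv : 0 < v) :
    Real.Gamma u * Real.Gamma v =
      Real.Gamma (u + v) * ∫ x in (0:ℝ)..1, x ^ (u - 1) * (1 - x) ^ (v - 1) := by
  have h := Complex.Gamma_mul_Gamma_eq_betaIntegral (s := (u:ℂ)) (t := (v:ℂ))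
    (by simpa using hu) (by simpa using hv)
  rw [Complex.betaIntegral] at h
  have hint : (∫ x in (0:ℝ)..1, (x:ℂ) ^ ((u:ℂ) - 1) * ((1:ℂ) - (x:ℂ)) ^ ((v:ℂ) - 1)) =
      ((∫ x in (0:ℝ)..1, x ^ (u - 1) * (1 - x) ^ (v - 1) : ℝ) : ℂ) := by
    rw [← intervalIntegral.integral_ofReal]
    apply intervalIntegral.integral_congr
    intro x hx
    rw [Set.uIcc_of_le (by norm_num : (0:ℝ) ≤ 1)] at hx
    show (x:ℂ) ^ ((u:ℂ) - 1) * ((1:ℂ) - (x:ℂ)) ^ ((v:ℂ) - 1)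
        = ((x ^ (u - 1) * (1 - x) ^ (v - 1) : ℝ) : ℂ)
    rw [Complex.ofReal_mul, Complex.ofReal_cpow hx.1,
      Complex.ofReal_cpow (by linarith [hx.2] : (0:ℝ) ≤ 1 - x)]
    push_cast
    ring
  rw [hint, ← Complex.ofReal_add, Complex.Gamma_ofReal, Complex.Gamma_ofReal,
    Complex.Gamma_ofReal] at h
  exact_mod_cast h

private lemma subst_lemma (p a : ℝ) (hp : 1 < p) :
    ∫ u in (0:ℝ)..1, u ^ (1/p - 1) * (1 - u) ^ (-a) =
      p * ∫ t in (0:ℝ)..1, (1 - t ^ p) ^ (-a) := by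
  have hp0 : (0:ℝ) < p := lt_trans one_pos hp
  have himg : (fun t : ℝ => t ^ p) '' Ioo 0 1 = Ioo 0 1 := by
    ext u
    constructor
    · rintro ⟨t, ht, rfl⟩
      exact ⟨Real.rpow_pos_of_pos ht.1 p, Real.rpow_lt_one ht.1.le ht.2 hp0⟩
    · intro hu
      refine ⟨u ^ (1/p), ⟨Real.rpow_pos_of_pos hu.1 _,
        Real.rpow_lt_one hu.1.le hu.2 (by positivity)⟩, ?_⟩
      show (u ^ (1/p)) ^ p = u
      rw [← Real.rpow_mul hu.1.le, one_div, inv_mul_cancel₀ hp0.ne', Real.rpow_one]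
  have hderiv : ∀ t ∈ Ioo (0:ℝ) 1, HasDerivWithinAt (fun t : ℝ => t ^ p)
      (p * t ^ (p - 1)) (Ioo 0 1) t := fun t ht =>
    (Real.hasDerivAt_rpow_const (Or.inl ht.1.ne')).hasDerivWithinAt
  have hinj : InjOn (fun t : ℝ => t ^ p) (Ioo 0 1) := fun x hx y hy hxy =>
    Real.rpow_left_injOn hp0.ne' hx.1.le hy.1.le hxy
  have key := integral_image_eq_integral_abs_deriv_smul measurableSet_Ioo hderiv hinj
    (fun u => u ^ (1/p - 1) * (1 - u) ^ (-a))
  rw [himg] at key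
  have hcongr : ∫ t in Ioo (0:ℝ) 1, |p * t ^ (p-1)| •
      ((t ^ p) ^ (1/p - 1) * (1 - t ^ p) ^ (-a)) =
      ∫ t in Ioo (0:ℝ) 1, p * (1 - t ^ p) ^ (-a) := by
    apply setIntegral_congr_fun measurableSet_Ioo
    intro t ht
    have ht0 : (0:ℝ) < t := ht.1
    have h1 : (t ^ p) ^ (1/p - 1) = t ^ (1 - p) := by
      rw [← Real.rpow_mul ht0.le]
      congr 1
      field_simp
    have h2 : |p * t ^ (p-1)| = p * t ^ (p-1) := by
      rw [abs_of_pos (by positivity)]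
    show |p * t ^ (p-1)| • ((t ^ p) ^ (1/p - 1) * (1 - t ^ p) ^ (-a))
        = p * (1 - t ^ p) ^ (-a)
    rw [h2, h1, smul_eq_mul]
    have h3 : t ^ (p-1) * t ^ (1-p) = 1 := by
      rw [← Real.rpow_add ht0]
      norm_num
    calc p * t ^ (p-1) * (t ^ (1-p) * (1 - t ^ p) ^ (-a))
        = p * (t ^ (p-1) * t ^ (1-p)) * (1 - t ^ p) ^ (-a) := by ring
      _ = p * (1 - t ^ p) ^ (-a) := by rw [h3, mul_one]
  rw [intervalIntegral.integral_of_le (by norm_num : (0:ℝ) ≤ 1),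
    intervalIntegral.integral_of_le (by norm_num : (0:ℝ) ≤ 1),
    MeasureTheory.integral_Ioc_eq_integral_Ioo, MeasureTheory.integral_Ioc_eq_integral_Ioo,
    key, hcongr, MeasureTheory.integral_const_mul]

/-- The identity π_{2,p}/2^{2/p} = π_{p*,p}/2 asserted in Lemma 1. -/
theorem pi2p_pistp_relation
    (p pst : ℝ) (hp : 1 < p) (hpst : pst = p / (p - 1)) :
    2 ^ ((2:ℝ)/p) * ∫ t in (0:ℝ)..1, (1 - t ^ p) ^ (-(1/pst)) =
      2 * ∫ t in (0:ℝ)..1, (1 - t ^ p) ^ (-(1/2) : ℝ) := by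
  have hp0 : (0:ℝ) < p := lt_trans one_pos hp
  have hp1 : (0:ℝ) < p - 1 := by linarith
  set x : ℝ := 1/p with hx
  have hx0 : 0 < x := by positivity
  have hx1 : x < 1 := by rw [hx]; rw [div_lt_one hp0]; linarith
  -- rewrite the exponent -(1/pst) as -(1-x)
  have hep : -(1/pst) = -(1 - x) := by
    rw [hpst, hx]
    field_simp
  rw [hep]
  -- apply the substitution lemma to both integrals
  have hs1 := subst_lemma p (1 - x) hp
  have hs2 := subst_lemma p (1/2 : ℝ) hp
  have hne : -((1:ℝ)/2) = (-(1/2) : ℝ) := by norm_num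
  rw [hne] at hs2
  have hI1 : ∫ t in (0:ℝ)..1, (1 - t ^ p) ^ (-(1-x)) =
      p⁻¹ * ∫ u in (0:ℝ)..1, u ^ (x - 1) * (1 - u) ^ (x - 1) := by
    have : (1:ℝ)/p - 1 = x - 1 := by rw [hx]
    rw [this] at hs1
    have h2 : -(1 - x) = x - 1 := by ring
    rw [h2] at hs1 ⊢
    rw [hs1]
    field_simp
  have hI2 : ∫ t in (0:ℝ)..1, (1 - t ^ p) ^ ((-(1/2)) : ℝ) =
      p⁻¹ * ∫ u in (0:ℝ)..1, u ^ (x - 1) * (1 - u) ^ ((1/2 : ℝ) - 1) := by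
    have : (1:ℝ)/p - 1 = x - 1 := by rw [hx]
    rw [this] at hs2
    have h2 : ((1:ℝ)/2) - 1 = -(1/2 : ℝ) := by norm_num
    rw [h2, hs2]
    field_simp
  rw [hI1, hI2]
  -- Beta function evaluations
  have hB1 := realBeta x x hx0 hx0
  have hB2 := realBeta x (1/2) hx0 (by norm_num)
  have hG1 : 0 < Real.Gamma (x + x) := Real.Gamma_pos_of_pos (by linarith)
  have hG2 : 0 < Real.Gamma (x + 1/2) := Real.Gamma_pos_of_pos (by linarith)
  have hGx : 0 < Real.Gamma x := Real.Gamma_pos_of_pos hx0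
  have hJ1 : ∫ u in (0:ℝ)..1, u ^ (x - 1) * (1 - u) ^ (x - 1) =
      Real.Gamma x * Real.Gamma x / Real.Gamma (x + x) := by
    rw [eq_div_iff hG1.ne']
    linarith [hB1]
  have hJ2 : ∫ u in (0:ℝ)..1, u ^ (x - 1) * (1 - u) ^ ((1/2 : ℝ) - 1) =
      Real.Gamma x * Real.Gamma (1/2) / Real.Gamma (x + 1/2) := by
    rw [eq_div_iff hG2.ne']
    linarith [hB2]
  rw [hJ1, hJ2]
  -- Legendre duplication
  have hdup := Real.Gamma_mul_Gamma_add_half x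
  have h2x : Real.Gamma (2 * x) = Real.Gamma (x + x) := by ring_nf
  rw [h2x] at hdup
  have hghalf : Real.Gamma (1/2 : ℝ) = Real.sqrt π := Real.Gamma_one_half_eq
  have hpow : (2:ℝ) ^ ((2:ℝ)/p) * (2:ℝ) ^ (1 - 2*x) = 2 := by
    rw [← Real.rpow_add (by norm_num : (0:ℝ) < 2)]
    have : (2:ℝ)/p + (1 - 2*x) = 1 := by rw [hx]; ring
    rw [this, Real.rpow_one]
  have hsp : (0:ℝ) < Real.sqrt π := Real.sqrt_pos.mpr Real.pi_pos
  -- final algebra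
  rw [hghalf]
  have key : (2:ℝ) ^ ((2:ℝ)/p) * (Real.Gamma x * Real.Gamma x / Real.Gamma (x + x)) =
      2 * (Real.Gamma x * Real.sqrt π / Real.Gamma (x + 1/2)) := by
    rw [mul_div_assoc', mul_div_assoc', div_eq_div_iff hG1.ne' hG2.ne']
    linear_combination ((2:ℝ) ^ ((2:ℝ)/p) * Real.Gamma x) * hdup +
      (Real.Gamma x * Real.Gamma (x + x) * Real.sqrt π) * hpow
  linear_combination p⁻¹ * key
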